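/- Let S and T be semigroups, A an (S,T)-biact, and B a subact of A. For each K ∈ {L,R,J}: A satisfies M_K if and only if both B (as an (S,T)-biact under the restricted actions) and the Rees quotient A/B satisfy M_K. -/

import Mathlib

/-! Green's preorders and equivalences on an `(S,T)`-biact, given by the left
action `sm : S → A → A` and the right action `rm : A → T → A`. -/

section BiactDefs

variable {S T A : Type*}

/-- `a ≤_L b` iff `a = b` or `a = s · b` for some `s ∈ S`. -/
def leLAct (sm : S → A → A) (a b : A) : Prop :=
  a = b ∨ ∃ s, a = sm s b

/-- `a ≤_R b` iff `a = b` or `a = b · t` for some `t ∈ T`. -/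
def leRAct (rm : A → T → A) (a b : A) : Prop :=
  a = b ∨ ∃ t, a = rm b t

/-- `a ≤_J b` iff `a = b`, or `a = s · b`, or `a = b · t`, or `a = s · b · t`. -/
def leJAct (sm : S → A → A) (rm : A → T → A) (a b : A) : Prop :=
  a = b ∨ (∃ s, a = sm s b) ∨ (∃ t, a = rm b t) ∨ ∃ s t, a = rm (sm s b) t

/-- Green's relation `L` on a biact. -/
def eqvLAct (sm : S → A → A) (a b : A) : Prop :=
  leLAct sm a b ∧ leLAct sm b a

/-- Green's relation `R` on a biact. -/
def eqvRAct (rm : A → T → A) (a b : A) : Prop :=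
  leRAct rm a b ∧ leRAct rm b a

/-- Green's relation `J` on a biact. -/
def eqvJAct (sm : S → A → A) (rm : A → T → A) (a b : A) : Prop :=
  leJAct sm rm a b ∧ leJAct sm rm b a

/-- `(sm, rm)` constitutes an `(S,T)`-biact structure on `A`. -/
def IsBiact [Semigroup S] [Semigroup T] (sm : S → A → A) (rm : A → T → A) : Prop :=
  (∀ (s s' : S) (a : A), sm s (sm s' a) = sm (s * s') a) ∧
  (∀ (a : A) (t t' : T), rm (rm a t) t' = rm a (t * t')) ∧
  (∀ (s : S) (a : A) (t : T), rm (sm s a) t = sm s (rm a t))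

/-- The minimal condition `M_L`: every descending `≤_L`-chain eventually stabilises. -/
def MinLAct (sm : S → A → A) : Prop :=
  ∀ f : ℕ → A, (∀ n, leLAct sm (f (n + 1)) (f n)) →
    ∃ m, ∀ n ≥ m, eqvLAct sm (f m) (f n)

/-- The minimal condition `M_R`. -/
def MinRAct (rm : A → T → A) : Prop :=
  ∀ f : ℕ → A, (∀ n, leRAct rm (f (n + 1)) (f n)) →
    ∃ m, ∀ n ≥ m, eqvRAct rm (f m) (f n)

/-- The minimal condition `M_J`. -/
def MinJAct (sm : S → A → A) (rm : A → T → A) : Prop :=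
  ∀ f : ℕ → A, (∀ n, leJAct sm rm (f (n + 1)) (f n)) →
    ∃ m, ∀ n ≥ m, eqvJAct sm rm (f m) (f n)

/-- A biact is left stable if `(s · a) J a` implies `(s · a) L a`. -/
def LeftStableAct (sm : S → A → A) (rm : A → T → A) : Prop :=
  ∀ (a : A) (s : S), eqvJAct sm rm (sm s a) a → eqvLAct sm (sm s a) a

/-- A biact is right stable if `(a · t) J a` implies `(a · t) R a`. -/
def RightStableAct (sm : S → A → A) (rm : A → T → A) : Prop :=
  ∀ (a : A) (t : T), eqvJAct sm rm (rm a t) a → eqvRAct rm (rm a t) a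

/-- A biact is stable if it is left and right stable. -/
def StableAct (sm : S → A → A) (rm : A → T → A) : Prop :=
  LeftStableAct sm rm ∧ RightStableAct sm rm

/-- A biact is `L`-periodic if for all `s, a` there is `n ≥ 1` with `(sⁿ · a) L (sⁿ⁺¹ · a)`. -/
def LPeriodicAct (sm : S → A → A) : Prop :=
  ∀ (s : S) (a : A), ∃ n : ℕ, 1 ≤ n ∧ eqvLAct sm ((sm s)^[n] a) ((sm s)^[n + 1] a)

/-- A biact is `R`-periodic if for all `t, a` there is `n ≥ 1` with `(a · tⁿ) R (a · tⁿ⁺¹)`. -/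
def RPeriodicAct (rm : A → T → A) : Prop :=
  ∀ (t : T) (a : A), ∃ n : ℕ, 1 ≤ n ∧
    eqvRAct rm ((fun x => rm x t)^[n] a) ((fun x => rm x t)^[n + 1] a)

end BiactDefs

/-- `B` is a subact of the biact `A`: a nonempty subset closed under both actions. -/
def IsSubact {S T A : Type*} (sm : S → A → A) (rm : A → T → A) (B : Set A) : Prop :=
  B.Nonempty ∧ (∀ (s : S), ∀ b ∈ B, sm s b ∈ B) ∧ (∀ (t : T), ∀ b ∈ B, rm b t ∈ B)

section ReesQuotient

open Classical

/-- The left action of the Rees quotient `A/B`, on `(A \ B) ⊔ {0}` (with `0 = none`). -/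
noncomputable def reesSm {S A : Type*} (sm : S → A → A) (B : Set A) (s : S) :
    Option {a : A // a ∉ B} → Option {a : A // a ∉ B} :=
  fun x => x.bind fun a => if h : sm s a.1 ∈ B then none else some ⟨sm s a.1, h⟩

/-- The right action of the Rees quotient `A/B`, on `(A \ B) ⊔ {0}` (with `0 = none`). -/
noncomputable def reesRm {T A : Type*} (rm : A → T → A) (B : Set A) :
    Option {a : A // a ∉ B} → T → Option {a : A // a ∉ B} :=
  fun x t => x.bind fun a => if h : rm a.1 t ∈ B then none else some ⟨rm a.1 t, h⟩

end ReesQuotient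

section Abstract

/-- Abstract "divisibility" preorder generated by a family of maps. -/
def gle {I A : Type*} (act : I → A → A) (a b : A) : Prop :=
  a = b ∨ ∃ i, a = act i b

/-- Abstract minimal condition. -/
def gmin {I A : Type*} (act : I → A → A) : Prop :=
  ∀ f : ℕ → A, (∀ n, gle act (f (n + 1)) (f n)) →
    ∃ m, ∀ n ≥ m, gle act (f m) (f n) ∧ gle act (f n) (f m)

open Classical in
/-- The quotient action of a family of maps on `(A \ B) ⊔ {0}`. -/
noncomputable def qact {I A : Type*} (act : I → A → A) (B : Set A) (i : I) :
    Option {a : A // a ∉ B} → Option {a : A // a ∉ B} :=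
  fun x => x.bind fun a => if h : act i a.1 ∈ B then none else some ⟨act i a.1, h⟩

open Classical in
/-- The projection `A → (A \ B) ⊔ {0}`. -/
noncomputable def pia {A : Type*} (B : Set A) (a : A) : Option {a : A // a ∉ B} :=
  if h : a ∈ B then none else some ⟨a, h⟩

variable {I A : Type*} {act : I → A → A} {B : Set A}

theorem gle_qact_none {x : Option {a : A // a ∉ B}} (h : gle (qact act B) x none) :
    x = none := by
  rcases h with h | ⟨i, hi⟩
  · exact h
  · exact hi

theorem gle_qact_some_iff {x y : {a : A // a ∉ B}} :
    gle (qact act B) (some x) (some y) ↔ gle act x.1 y.1 := by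
  constructor
  · rintro (h | ⟨i, hi⟩)
    · exact Or.inl (congrArg Subtype.val (Option.some.inj h))
    · refine Or.inr ⟨i, ?_⟩
      simp only [qact, Option.bind_some] at hi
      split at hi
      · exact absurd hi (by simp)
      · exact congrArg Subtype.val (Option.some.inj hi)
  · rintro (h | ⟨i, hi⟩)
    · exact Or.inl (congrArg some (Subtype.ext h))
    · refine Or.inr ⟨i, ?_⟩
      have hb : act i y.1 ∉ B := hi ▸ x.2
      show some x = Option.bind (some y) _
      simp only [Option.bind_some]
      rw [dif_neg hb]
      exact congrArg some (Subtype.ext hi)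

theorem pia_qact (hcl : ∀ i, ∀ b ∈ B, act i b ∈ B) (i : I) (a : A) :
    pia B (act i a) = qact act B i (pia B a) := by
  by_cases h : a ∈ B
  · have h1 : pia B a = none := dif_pos h
    have h2 : pia B (act i a) = none := dif_pos (hcl i a h)
    rw [h1, h2]
    rfl
  · have h1 : pia B a = some ⟨a, h⟩ := dif_neg h
    rw [h1]
    rfl

/-- The abstract main theorem: the minimal condition for the generated
preorder holds on `A` iff it holds on a closed subset `B` and on the quotient. -/
theorem gmin_iff (hcl : ∀ i, ∀ b ∈ B, act i b ∈ B) :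
    gmin act ↔
      (gmin (fun (i : I) (b : B) => (⟨act i b.1, hcl i b.1 b.2⟩ : B)) ∧
       gmin (qact act B)) := by
  have lift : ∀ b b' : B, gle act b.1 b'.1 →
      gle (fun (i : I) (b : B) => (⟨act i b.1, hcl i b.1 b.2⟩ : B)) b b' := by
    rintro b b' (h | ⟨i, hi⟩)
    · exact Or.inl (Subtype.ext h)
    · exact Or.inr ⟨i, Subtype.ext hi⟩
  constructor
  · intro hA
    constructor
    · intro fb hfb
      have hf : ∀ n, gle act ((fb (n + 1)).1) ((fb n).1) := by
        intro n
        rcases hfb n with h | ⟨i, hi⟩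
        · exact Or.inl (congrArg Subtype.val h)
        · exact Or.inr ⟨i, congrArg Subtype.val hi⟩
      obtain ⟨m, hm⟩ := hA (fun n => (fb n).1) hf
      refine ⟨m, fun n hn => ?_⟩
      obtain ⟨h1, h2⟩ := hm n hn
      exact ⟨lift _ _ h1, lift _ _ h2⟩
    · intro g hg
      by_cases hnone : ∃ n, g n = none
      · obtain ⟨n₀, h0⟩ := hnone
        have hall : ∀ k, g (n₀ + k) = none := by
          intro k
          induction k with
          | zero => exact h0
          | succ k ih =>
            have h' := hg (n₀ + k)
            rw [ih] at h'
            exact gle_qact_none h'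
        refine ⟨n₀, fun n hn => ?_⟩
        have h1 : g n = none := by
          have := hall (n - n₀)
          rwa [Nat.add_sub_cancel' hn] at this
        rw [h0, h1]
        exact ⟨Or.inl rfl, Or.inl rfl⟩
      · push_neg at hnone
        have hx : ∀ n, ∃ x : {a : A // a ∉ B}, g n = some x := fun n =>
          Option.ne_none_iff_exists'.mp (hnone n)
        choose x hxeq using hx
        have hf : ∀ n, gle act (x (n + 1)).1 (x n).1 := by
          intro n
          have h' := hg n
          rw [hxeq n, hxeq (n + 1)] at h'
          exact gle_qact_some_iff.mp h'
        obtain ⟨m, hm⟩ := hA (fun n => (x n).1) hf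
        refine ⟨m, fun n hn => ?_⟩
        obtain ⟨h1, h2⟩ := hm n hn
        rw [hxeq m, hxeq n]
        exact ⟨gle_qact_some_iff.mpr h1, gle_qact_some_iff.mpr h2⟩
  · rintro ⟨hBmin, hQmin⟩ f hf
    have hg : ∀ n, gle (qact act B) (pia B (f (n + 1))) (pia B (f n)) := by
      intro n
      rcases hf n with h | ⟨i, hi⟩
      · exact Or.inl (congrArg (pia B) h)
      · exact Or.inr ⟨i, by rw [hi, pia_qact hcl]⟩
    obtain ⟨m₀, hm₀⟩ := hQmin (fun n => pia B (f n)) hg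
    by_cases hmem : f m₀ ∈ B
    · have hg0 : pia B (f m₀) = none := dif_pos hmem
      have hall : ∀ n ≥ m₀, f n ∈ B := by
        intro n hn
        have h2 := (hm₀ n hn).2
        rw [hg0] at h2
        have hh := gle_qact_none (x := pia B (f n)) h2
        by_contra hne
        rw [pia, dif_neg hne] at hh
        exact Option.some_ne_none _ hh
      have hfb : ∀ k, gle (fun (i : I) (b : B) => (⟨act i b.1, hcl i b.1 b.2⟩ : B))
          (⟨f (m₀ + (k + 1)), hall _ (Nat.le_add_right _ _)⟩ : B)
          (⟨f (m₀ + k), hall _ (Nat.le_add_right _ _)⟩ : B) := by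
        intro k
        rcases hf (m₀ + k) with h | ⟨i, hi⟩
        · exact Or.inl (Subtype.ext h)
        · exact Or.inr ⟨i, Subtype.ext hi⟩
      obtain ⟨m₁, hm₁⟩ := hBmin
        (fun k => (⟨f (m₀ + k), hall _ (Nat.le_add_right _ _)⟩ : B)) hfb
      refine ⟨m₀ + m₁, fun n hn => ?_⟩
      obtain ⟨h1, h2⟩ := hm₁ (n - m₀) (by omega)
      have heq : m₀ + (n - m₀) = n := by omega
      constructor
      · rcases h1 with h | ⟨i, hi⟩
        · left
          have := congrArg Subtype.val h
          simpa [heq] using this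
        · right
          refine ⟨i, ?_⟩
          have := congrArg Subtype.val hi
          simpa [heq] using this
      · rcases h2 with h | ⟨i, hi⟩
        · left
          have := congrArg Subtype.val h
          simpa [heq] using this
        · right
          refine ⟨i, ?_⟩
          have := congrArg Subtype.val hi
          simpa [heq] using this
    · have hg0 : pia B (f m₀) = some ⟨f m₀, hmem⟩ := dif_neg hmem
      refine ⟨m₀, fun n hn => ?_⟩
      obtain ⟨h1, h2⟩ := hm₀ n hn
      have hnB : f n ∉ B := by
        intro hfn
        have hpn : pia B (f n) = none := dif_pos hfn
        have h1' := h1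
        rw [hg0, hpn] at h1'
        have := gle_qact_none h1'
        exact Option.some_ne_none _ this
      have hgn : pia B (f n) = some ⟨f n, hnB⟩ := dif_neg hnB
      rw [hg0, hgn] at h1 h2
      exact ⟨gle_qact_some_iff.mp h1, gle_qact_some_iff.mp h2⟩

/-- Transfer of the minimal condition along an equivalence of preorders. -/
theorem minrel_congr {A : Type*} {le1 le2 : A → A → Prop}
    (h : ∀ a b, le1 a b ↔ le2 a b) :
    (∀ f : ℕ → A, (∀ n, le1 (f (n + 1)) (f n)) →
      ∃ m, ∀ n ≥ m, le1 (f m) (f n) ∧ le1 (f n) (f m)) ↔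
    (∀ f : ℕ → A, (∀ n, le2 (f (n + 1)) (f n)) →
      ∃ m, ∀ n ≥ m, le2 (f m) (f n) ∧ le2 (f n) (f m)) := by
  have aux : ∀ {p q : A → A → Prop}, (∀ a b, p a b ↔ q a b) →
      (∀ f : ℕ → A, (∀ n, p (f (n + 1)) (f n)) →
        ∃ m, ∀ n ≥ m, p (f m) (f n) ∧ p (f n) (f m)) →
      (∀ f : ℕ → A, (∀ n, q (f (n + 1)) (f n)) →
        ∃ m, ∀ n ≥ m, q (f m) (f n) ∧ q (f n) (f m)) := by
    intro p q hpq hmin f hf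
    obtain ⟨m, hm⟩ := hmin f (fun n => (hpq _ _).mpr (hf n))
    exact ⟨m, fun n hn => ⟨(hpq _ _).mp (hm n hn).1, (hpq _ _).mp (hm n hn).2⟩⟩
  exact ⟨aux h, aux (fun a b => (h a b).symm)⟩

/-- The combined family of maps generating the `J`-preorder. -/
def actJ {S T A : Type*} (sm : S → A → A) (rm : A → T → A) :
    S ⊕ T ⊕ S × T → A → A
  | Sum.inl s => sm s
  | Sum.inr (Sum.inl t) => fun a => rm a t
  | Sum.inr (Sum.inr (s, t)) => fun a => rm (sm s a) t

theorem leJ_iff_gle {S T A : Type*} (sm : S → A → A) (rm : A → T → A) (a b : A) :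
    leJAct sm rm a b ↔ gle (actJ sm rm) a b := by
  constructor
  · rintro (h | ⟨s, h⟩ | ⟨t, h⟩ | ⟨s, t, h⟩)
    · exact Or.inl h
    · exact Or.inr ⟨Sum.inl s, h⟩
    · exact Or.inr ⟨Sum.inr (Sum.inl t), h⟩
    · exact Or.inr ⟨Sum.inr (Sum.inr (s, t)), h⟩
  · rintro (h | ⟨(s | t | ⟨s, t⟩), h⟩)
    · exact Or.inl h
    · exact Or.inr (Or.inl ⟨s, h⟩)
    · exact Or.inr (Or.inr (Or.inl ⟨t, h⟩))
    · exact Or.inr (Or.inr (Or.inr ⟨s, t, h⟩))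

end Abstract

/-- For `K ∈ {L, R, J}`: a biact `A` satisfies `M_K` if and only if both a
subact `B` (under the restricted actions) and the Rees quotient `A/B` satisfy `M_K`. -/
theorem minK_iff_subact_and_reesQuotient {S T A : Type*} [Semigroup S] [Semigroup T]
    (sm : S → A → A) (rm : A → T → A) (hbi : IsBiact sm rm)
    (B : Set A) (hB : IsSubact sm rm B) :
    (MinLAct sm ↔
      (MinLAct (fun (s : S) (b : B) => (⟨sm s b.1, hB.2.1 s b.1 b.2⟩ : B)) ∧
       MinLAct (reesSm sm B))) ∧
    (MinRAct rm ↔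
      (MinRAct (fun (b : B) (t : T) => (⟨rm b.1 t, hB.2.2 t b.1 b.2⟩ : B)) ∧
       MinRAct (reesRm rm B))) ∧
    (MinJAct sm rm ↔
      (MinJAct (fun (s : S) (b : B) => (⟨sm s b.1, hB.2.1 s b.1 b.2⟩ : B))
               (fun (b : B) (t : T) => (⟨rm b.1 t, hB.2.2 t b.1 b.2⟩ : B)) ∧
       MinJAct (reesSm sm B) (reesRm rm B))) := by
  have hclJ : ∀ i, ∀ b ∈ B, actJ sm rm i b ∈ B := by
    rintro (s | t | ⟨s, t⟩) b hb
    · exact hB.2.1 s b hb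
    · exact hB.2.2 t b hb
    · exact hB.2.2 t _ (hB.2.1 s b hb)
  refine ⟨gmin_iff hB.2.1, gmin_iff hB.2.2, ?_⟩
  -- the `J` case
  have h1 : MinJAct sm rm ↔ gmin (actJ sm rm) :=
    minrel_congr (leJ_iff_gle sm rm)
  have h2 : MinJAct (fun (s : S) (b : B) => (⟨sm s b.1, hB.2.1 s b.1 b.2⟩ : B))
        (fun (b : B) (t : T) => (⟨rm b.1 t, hB.2.2 t b.1 b.2⟩ : B)) ↔
      gmin (fun (i : S ⊕ T ⊕ S × T) (b : B) =>
        (⟨actJ sm rm i b.1, hclJ i b.1 b.2⟩ : B)) := by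
    refine minrel_congr (fun a b => ?_)
    constructor
    · rintro (h | ⟨s, h⟩ | ⟨t, h⟩ | ⟨s, t, h⟩)
      · exact Or.inl h
      · exact Or.inr ⟨Sum.inl s, Subtype.ext (congrArg Subtype.val h)⟩
      · exact Or.inr ⟨Sum.inr (Sum.inl t), Subtype.ext (congrArg Subtype.val h)⟩
      · exact Or.inr ⟨Sum.inr (Sum.inr (s, t)), Subtype.ext (congrArg Subtype.val h)⟩
    · rintro (h | ⟨(s | t | ⟨s, t⟩), h⟩)
      · exact Or.inl h
      · exact Or.inr (Or.inl ⟨s, Subtype.ext (congrArg Subtype.val h)⟩)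
      · exact Or.inr (Or.inr (Or.inl ⟨t, Subtype.ext (congrArg Subtype.val h)⟩))
      · exact Or.inr (Or.inr (Or.inr ⟨s, t, Subtype.ext (congrArg Subtype.val h)⟩))
  have hcomp : ∀ (s : S) (t : T) (y : Option {a : A // a ∉ B}),
      reesRm rm B (reesSm sm B s y) t
        = qact (actJ sm rm) B (Sum.inr (Sum.inr (s, t))) y := by
    intro s t y
    cases y with
    | none => rfl
    | some a =>
      classical
      simp only [qact, reesSm, reesRm, actJ, Option.bind_some]
      by_cases h : sm s a.1 ∈ B
      · rw [dif_pos h]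
        simp only [Option.bind_none]
        simp [hB.2.2 t (sm s a.1) h]
      · rw [dif_neg h]
        simp only [Option.bind_some]
        rfl
  have h3 : MinJAct (reesSm sm B) (reesRm rm B) ↔ gmin (qact (actJ sm rm) B) := by
    refine minrel_congr (fun x y => ?_)
    constructor
    · rintro (h | ⟨s, h⟩ | ⟨t, h⟩ | ⟨s, t, h⟩)
      · exact Or.inl h
      · exact Or.inr ⟨Sum.inl s, h⟩
      · exact Or.inr ⟨Sum.inr (Sum.inl t), h⟩
      · exact Or.inr ⟨Sum.inr (Sum.inr (s, t)), h.trans (hcomp s t y)⟩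
    · rintro (h | ⟨(s | t | ⟨s, t⟩), h⟩)
      · exact Or.inl h
      · exact Or.inr (Or.inl ⟨s, h⟩)
      · exact Or.inr (Or.inr (Or.inl ⟨t, h⟩))
      · exact Or.inr (Or.inr (Or.inr ⟨s, t, h.trans (hcomp s t y).symm⟩))
  exact h1.trans ((gmin_iff hclJ).trans (and_congr h2.symm h3.symm))
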